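/- Let a, b, k, c ∈ ℝ and let s = ẋ₃-sliding variable satisfy V̇₆(t) = s·(ẋ₃ + k·x₁ + c·x₂) where ẋ₃ = -a·x₁ - b·x₁³ - c·x₂ + f + u. If the control is u = b·x₁³ + (a-k)·x₁ + v with v = -(F + ρ₁/√2)·sign(s) - ρ₂·s, ρ₁, ρ₂ > 0, and |f| ≤ F, then V̇₆ ≤ -ρ₁·|s|/√2 - ρ₂·s², i.e. V̇₆ ≤ -ρ₁√(V₆) - 2ρ₂V₆ with V₆ = s²/2. -/
import Mathlib


open Real

theorem stmt_11 (a b k c x₁ x₂ f F s ρ₁ ρ₂ : ℝ)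
    (hρ₁ : 0 < ρ₁) (hρ₂ : 0 < ρ₂) (hf : |f| ≤ F) :
    s * ((-a * x₁ - b * x₁ ^ 3 - c * x₂ + f +
        (b * x₁ ^ 3 + (a - k) * x₁ +
          (-(F + ρ₁ / Real.sqrt 2) * Real.sign s - ρ₂ * s))) + k * x₁ + c * x₂) ≤
      -ρ₁ * |s| / Real.sqrt 2 - ρ₂ * s ^ 2 ∧
    -ρ₁ * |s| / Real.sqrt 2 - ρ₂ * s ^ 2 ≤
      -ρ₁ * Real.sqrt (s ^ 2 / 2) - 2 * ρ₂ * (s ^ 2 / 2) := by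
  have hsign : s * Real.sign s = |s| := by
    rcases lt_trichotomy s 0 with h | h | h
    · simp [Real.sign_of_neg h, abs_of_neg h]
    · simp [h]
    · simp [Real.sign_of_pos h, abs_of_pos h]
  have hsf : s * f ≤ |s| * F := by
    calc s * f ≤ |s * f| := le_abs_self _
    _ = |s| * |f| := abs_mul s f
    _ ≤ |s| * F := mul_le_mul_of_nonneg_left hf (abs_nonneg s)
  constructor
  · have : s * ((-a * x₁ - b * x₁ ^ 3 - c * x₂ + f +
        (b * x₁ ^ 3 + (a - k) * x₁ +
          (-(F + ρ₁ / Real.sqrt 2) * Real.sign s - ρ₂ * s))) + k * x₁ + c * x₂)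
        = s * f - (F + ρ₁ / Real.sqrt 2) * |s| - ρ₂ * s ^ 2 := by
      rw [← hsign]; ring
    rw [this]
    have hd : 0 ≤ ρ₁ / Real.sqrt 2 := by positivity
    have := mul_nonneg hd (abs_nonneg s)
    have he : -ρ₁ * |s| / Real.sqrt 2 = -(ρ₁ / Real.sqrt 2 * |s|) := by ring
    linarith [hsf]
  · have h2 : Real.sqrt (s ^ 2 / 2) = |s| / Real.sqrt 2 := by
      rw [Real.sqrt_div' _ (by positivity), Real.sqrt_sq_eq_abs]
    rw [h2]; ring_nf; rfl
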